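/- If a measurable function f on [0,1] satisfies ‖f(·+h) − f(·)‖_{L_p[0,1]} ≤ C|h|^β for all |h| ≤ 1, with β + 1/q > α, then the generalized Besov seminorm satisfies ‖f‖_{B^{o,p,q}_{α,s}} ≤ C · 2^{1/q} · [s(β − α + 1/q)]^{−1/s}. -/

import Mathlib

open MeasureTheory Set

/-- If `‖f(·+h) − f(·)‖_{L_p[0,1]} ≤ C|h|^β` for all `|h| ≤ 1`, with
`β + 1/q > α`, then the generalized Besov seminorm satisfies
`‖f‖_{B^{o,p,q}_{α,s}} ≤ C · 2^{1/q} · (s(β − α + 1/q))^{−1/s}`. -/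
theorem stmt5 (f : ℝ → ℝ) (hmeas : Measurable f)
    (hvanish : ∀ t : ℝ, t ∉ Icc (0:ℝ) 1 → f t = 0)
    (p q s α C β : ℝ) (hp : 1 ≤ p) (hq : 1 ≤ q) (hs : 1 ≤ s)
    (hC : 0 < C) (hβ0 : 0 < β) (hβ1 : β ≤ 1) (hβα : β + 1 / q > α)
    (hHolder : ∀ h : ℝ, |h| ≤ 1 →
      (∫ t in Icc (0:ℝ) 1, |f (t + h) - f t| ^ p) ^ (1 / p) ≤ C * |h| ^ β) :
    (∫ δ in Ioc (0:ℝ) 1,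
        (δ ^ (-α) *
          (∫ h in Icc (-δ) δ,
            ((∫ t in Icc (0:ℝ) 1, |f (t + h) - f t| ^ p) ^ (1 / p)) ^ q) ^ (1 / q)) ^ s
          * δ⁻¹) ^ (1 / s)
      ≤ C * 2 ^ (1 / q) * (s * (β - α + 1 / q)) ^ (-(1 / s)) := by
  have hq0 : (0:ℝ) < q := lt_of_lt_of_le one_pos hq
  have hs0 : (0:ℝ) < s := lt_of_lt_of_le one_pos hs
  have hK : 0 < β - α + 1 / q := by
    have : (0:ℝ) < 1 / q := by positivity
    linarith
  set F : ℝ → ℝ := fun h => (∫ t in Icc (0:ℝ) 1, |f (t + h) - f t| ^ p) ^ (1 / p) with hFdef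
  have hFnn : ∀ h, 0 ≤ F h := fun h =>
    Real.rpow_nonneg
      (setIntegral_nonneg measurableSet_Icc fun t _ => Real.rpow_nonneg (abs_nonneg _) _) _
  set e : ℝ := (β - α + 1 / q) * s - 1 with hedef
  have he : (-1:ℝ) < e := by
    have : 0 < (β - α + 1 / q) * s := mul_pos hK hs0
    simp only [hedef]; linarith
  have hC2 : (0:ℝ) < C * 2 ^ (1 / q) := by positivity
  have key : ∀ δ ∈ Ioc (0:ℝ) 1,
      (δ ^ (-α) * (∫ h in Icc (-δ) δ, F h ^ q) ^ (1 / q)) ^ s * δ⁻¹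
        ≤ (C * 2 ^ (1 / q)) ^ s * δ ^ e := by
    intro δ hδ
    obtain ⟨hδ0, hδ1⟩ := hδ
    have hInn : 0 ≤ ∫ h in Icc (-δ) δ, F h ^ q :=
      setIntegral_nonneg measurableSet_Icc fun h _ => Real.rpow_nonneg (hFnn h) q
    have hb : ∀ h ∈ Icc (-δ) δ, F h ^ q ≤ (C * δ ^ β) ^ q := by
      intro h hh
      have habs : |h| ≤ δ := abs_le.2 ⟨hh.1, hh.2⟩
      have h1 : F h ≤ C * |h| ^ β := hHolder h (habs.trans hδ1)
      have h2 : C * |h| ^ β ≤ C * δ ^ β :=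
        mul_le_mul_of_nonneg_left (Real.rpow_le_rpow (abs_nonneg h) habs hβ0.le) hC.le
      exact Real.rpow_le_rpow (hFnn h) (h1.trans h2) hq0.le
    have hI : (∫ h in Icc (-δ) δ, F h ^ q) ≤ (2 * δ) * (C * δ ^ β) ^ q := by
      calc (∫ h in Icc (-δ) δ, F h ^ q)
          ≤ ∫ _h in Icc (-δ) δ, (C * δ ^ β) ^ q := by
            apply integral_mono_of_nonneg
            · exact Filter.Eventually.of_forall fun h => Real.rpow_nonneg (hFnn h) q
            · exact integrableOn_const measure_Icc_lt_top.ne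
            · exact (ae_restrict_iff' measurableSet_Icc).2 (Filter.Eventually.of_forall hb)
        _ = (2 * δ) * (C * δ ^ β) ^ q := by
            rw [setIntegral_const, measureReal_def, Real.volume_Icc, smul_eq_mul,
              ENNReal.toReal_ofReal (by linarith : (0:ℝ) ≤ δ - -δ)]
            ring
    have h3 : (∫ h in Icc (-δ) δ, F h ^ q) ^ (1 / q)
        ≤ 2 ^ (1 / q) * δ ^ (1 / q) * (C * δ ^ β) := by
      have hstep := Real.rpow_le_rpow hInn hI (by positivity : (0:ℝ) ≤ 1 / q)
      refine hstep.trans_eq ?_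
      rw [Real.mul_rpow (by linarith : (0:ℝ) ≤ 2 * δ) (by positivity),
        Real.mul_rpow (by norm_num : (0:ℝ) ≤ 2) hδ0.le,
        ← Real.rpow_mul (by positivity : (0:ℝ) ≤ C * δ ^ β), mul_one_div,
        div_self hq0.ne', Real.rpow_one]
    have h4 : δ ^ (-α) * (∫ h in Icc (-δ) δ, F h ^ q) ^ (1 / q)
        ≤ C * 2 ^ (1 / q) * δ ^ (β - α + 1 / q) := by
      have hm := mul_le_mul_of_nonneg_left h3 (Real.rpow_nonneg hδ0.le (-α))
      refine hm.trans_eq ?_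
      have e1 : δ ^ (β - α + 1 / q) = δ ^ (-α) * δ ^ (1 / q) * δ ^ β := by
        rw [← Real.rpow_add hδ0, ← Real.rpow_add hδ0]
        congr 1; ring
      rw [e1]; ring
    have h5 : (δ ^ (-α) * (∫ h in Icc (-δ) δ, F h ^ q) ^ (1 / q)) ^ s
        ≤ (C * 2 ^ (1 / q)) ^ s * δ ^ ((β - α + 1 / q) * s) := by
      have hbase : 0 ≤ δ ^ (-α) * (∫ h in Icc (-δ) δ, F h ^ q) ^ (1 / q) :=
        mul_nonneg (Real.rpow_nonneg hδ0.le _) (Real.rpow_nonneg hInn _)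
      have := Real.rpow_le_rpow hbase h4 hs0.le
      refine this.trans_eq ?_
      rw [Real.mul_rpow hC2.le (Real.rpow_nonneg hδ0.le _), ← Real.rpow_mul hδ0.le]
    calc (δ ^ (-α) * (∫ h in Icc (-δ) δ, F h ^ q) ^ (1 / q)) ^ s * δ⁻¹
        ≤ ((C * 2 ^ (1 / q)) ^ s * δ ^ ((β - α + 1 / q) * s)) * δ⁻¹ :=
          mul_le_mul_of_nonneg_right h5 (inv_nonneg.2 hδ0.le)
      _ = (C * 2 ^ (1 / q)) ^ s * δ ^ e := by
          rw [hedef, Real.rpow_sub hδ0, Real.rpow_one]; ring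
  have hint : IntegrableOn (fun δ : ℝ => (C * 2 ^ (1 / q)) ^ s * δ ^ e) (Ioc (0:ℝ) 1) := by
    have h := (intervalIntegral.intervalIntegrable_rpow' (r := e) he
      (a := (0:ℝ)) (b := 1)).const_mul ((C * 2 ^ (1 / q)) ^ s)
    exact (intervalIntegrable_iff_integrableOn_Ioc_of_le zero_le_one).1 h
  have hval : (∫ δ in Ioc (0:ℝ) 1, (C * 2 ^ (1 / q)) ^ s * δ ^ e)
      = (C * 2 ^ (1 / q)) ^ s * (1 / (e + 1)) := by
    rw [← intervalIntegral.integral_of_le zero_le_one,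
      intervalIntegral.integral_const_mul, integral_rpow (Or.inl he),
      Real.one_rpow, Real.zero_rpow (by linarith : e + 1 ≠ 0)]
    norm_num
  have hmono : (∫ δ in Ioc (0:ℝ) 1,
      (δ ^ (-α) * (∫ h in Icc (-δ) δ, F h ^ q) ^ (1 / q)) ^ s * δ⁻¹)
        ≤ (C * 2 ^ (1 / q)) ^ s * (1 / (e + 1)) := by
    rw [← hval]
    apply integral_mono_of_nonneg
    · refine (ae_restrict_iff' measurableSet_Ioc).2 (Filter.Eventually.of_forall ?_)
      intro δ hδ
      exact mul_nonneg (Real.rpow_nonneg (mul_nonneg (Real.rpow_nonneg hδ.1.le _)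
        (Real.rpow_nonneg (setIntegral_nonneg measurableSet_Icc
          fun h _ => Real.rpow_nonneg (hFnn h) q) _)) s) (inv_nonneg.2 hδ.1.le)
    · exact hint
    · exact (ae_restrict_iff' measurableSet_Ioc).2 (Filter.Eventually.of_forall key)
  have hlhsnn : 0 ≤ ∫ δ in Ioc (0:ℝ) 1,
      (δ ^ (-α) * (∫ h in Icc (-δ) δ, F h ^ q) ^ (1 / q)) ^ s * δ⁻¹ := by
    refine setIntegral_nonneg measurableSet_Ioc fun δ hδ => ?_
    exact mul_nonneg (Real.rpow_nonneg (mul_nonneg (Real.rpow_nonneg hδ.1.le _)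
      (Real.rpow_nonneg (setIntegral_nonneg measurableSet_Icc
        fun h _ => Real.rpow_nonneg (hFnn h) q) _)) s) (inv_nonneg.2 hδ.1.le)
  calc (∫ δ in Ioc (0:ℝ) 1,
        (δ ^ (-α) * (∫ h in Icc (-δ) δ, F h ^ q) ^ (1 / q)) ^ s * δ⁻¹) ^ (1 / s)
      ≤ ((C * 2 ^ (1 / q)) ^ s * (1 / (e + 1))) ^ (1 / s) :=
        Real.rpow_le_rpow hlhsnn hmono (by positivity)
    _ = C * 2 ^ (1 / q) * (s * (β - α + 1 / q)) ^ (-(1 / s)) := by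
        have he1 : e + 1 = s * (β - α + 1 / q) := by rw [hedef]; ring
        rw [Real.mul_rpow (Real.rpow_nonneg hC2.le s) (one_div_nonneg.2 (by linarith)),
          ← Real.rpow_mul hC2.le, mul_one_div, div_self hs0.ne', Real.rpow_one,
          one_div (e + 1), Real.inv_rpow (by linarith : (0:ℝ) ≤ e + 1),
          ← Real.rpow_neg (by linarith : (0:ℝ) ≤ e + 1), he1]
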